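/- Let Δ be a 2-local derivation on M_n(A), n ≥ 2, vanishing on the span of the matrix units, and let x = Σ_{i=1}^n x_{i,i} be a diagonal matrix. Then e_{k,k}Δ(x)e_{k,k} = Δ(x_{k,k}) for each k, where x_{k,k} is viewed as the matrix with (k,k)-entry x_{k,k} and zeros elsewhere. -/

import Mathlib

open Matrix

def IsDerivation {A : Type*} [Ring A] [Algebra ℂ A] (D : A → A) : Prop :=
  (∀ x y, D (x + y) = D x + D y) ∧ (∀ (c : ℂ) (x), D (c • x) = c • D x) ∧
  (∀ x y, D (x * y) = D x * y + x * D y)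

def Is2LocalDerivation {A : Type*} [Ring A] [Algebra ℂ A] (Δ : A → A) : Prop :=
  ∀ x y, ∃ D, IsDerivation D ∧ Δ x = D x ∧ Δ y = D y

def HasInnerDerivationProperty (A : Type*) [Ring A] [Algebra ℂ A] : Prop :=
  ∀ D : A → A, IsDerivation D → ∃ a : A, ∀ x, D x = a * x - x * a

/-- `Δ` vanishes on the linear span of the matrix units. -/
def VanishesOnUnits {A : Type*} [Ring A] [Algebra ℂ A] {n : ℕ}
    (Δ : Matrix (Fin n) (Fin n) A → Matrix (Fin n) (Fin n) A) : Prop :=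
  ∀ x ∈ Submodule.span ℂ (Set.range fun p : Fin n × Fin n =>
      Matrix.single p.1 p.2 (1 : A)), Δ x = 0

/-- For any derivation `D` and idempotent `e`, `e * D e * e = 0`. -/
lemma idem_der_aux {R : Type*} [Ring R] {D : R → R}
    (hmul : ∀ x y, D (x * y) = D x * y + x * D y) {e : R} (he : e * e = e) :
    e * D e * e = 0 := by
  have h := hmul e e
  rw [he] at h
  have t1 : e * (D e * e) * e = e * D e * e := by
    rw [← mul_assoc, mul_assoc (e * D e), he]
  have t2 : e * (e * D e) * e = e * D e * e := by
    rw [← mul_assoc e e (D e), he]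
  have h2 : e * D e * e = e * D e * e + e * D e * e := by
    conv_lhs => rw [h]
    rw [mul_add, add_mul, t1, t2]
  rwa [left_eq_add] at h2

/-- Key sandwich computation for a derivation and a commuting idempotent. -/
lemma sandwich_aux {R : Type*} [Ring R] {D : R → R}
    (hmul : ∀ a b, D (a * b) = D a * b + a * D b) {e x : R}
    (he : e * e = e) (hc : e * x = x * e) :
    e * D (e * x * e) * e = e * D x * e := by
  have hDe : e * D e * e = 0 := idem_der_aux hmul he
  rw [hmul, hmul]
  have t1 : e * (D e * x * e) * e = 0 := by
    calc e * (D e * x * e) * e = (e * D e) * ((x * e) * e) := by noncomm_ring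
      _ = (e * D e) * ((e * x) * e) := by rw [hc]
      _ = (e * D e * e) * (x * e) := by noncomm_ring
      _ = 0 := by rw [hDe, zero_mul]
  have t3 : e * (e * x * D e) * e = 0 := by
    calc e * (e * x * D e) * e = e * ((e * x) * (D e * e)) := by noncomm_ring
      _ = e * ((x * e) * (D e * e)) := by rw [hc]
      _ = (e * x) * (e * D e * e) := by noncomm_ring
      _ = 0 := by rw [hDe, mul_zero]
  have t2 : e * (e * D x * e) * e = (e * e) * D x * (e * e) := by noncomm_ring
  calc e * ((D e * x + e * D x) * e + e * x * D e) * e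
      = e * (D e * x * e) * e + e * (e * D x * e) * e + e * (e * x * D e) * e := by
        noncomm_ring
    _ = e * D x * e := by rw [t1, t2, t3, he]; simp

theorem stmt7 {A : Type*} [NormedRing A] [NormedAlgebra ℂ A] [CompleteSpace A]
    (hidp : HasInnerDerivationProperty A) {n : ℕ} (hn : 2 ≤ n)
    (Δ : Matrix (Fin n) (Fin n) A → Matrix (Fin n) (Fin n) A)
    (hΔ : Is2LocalDerivation Δ) (hvan : VanishesOnUnits Δ)
    (x : Matrix (Fin n) (Fin n) A) (hx : ∀ i j : Fin n, i ≠ j → x i j = 0)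
    (k : Fin n) :
    Matrix.single k k (1 : A) * Δ x * Matrix.single k k (1 : A) =
      Δ (Matrix.single k k (1 : A) * x * Matrix.single k k (1 : A)) := by
  set e := Matrix.single k k (1 : A) with he_def
  have he2 : e * e = e := by
    rw [he_def, Matrix.single_mul_single_same, one_mul]
  have hcomm : e * x = x * e := by
    ext i j
    rcases eq_or_ne i k with hi | hi <;> rcases eq_or_ne j k with hj | hj
    · rw [hi, hj]; simp [he_def]
    · rw [hi]; simp [he_def, hj, hx k j (Ne.symm hj)]
    · rw [hj]; simp [he_def, hi, hx i k hi]
    · simp [he_def, hi, hj]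
  have hΔe : Δ e = 0 := hvan e (Submodule.subset_span ⟨(k, k), rfl⟩)
  -- Step 1: e * Δ (e*x*e) * e = e * Δ x * e
  obtain ⟨D, hD, hDx, hDy⟩ := hΔ x (e * x * e)
  have step1 : e * Δ (e * x * e) * e = e * Δ x * e := by
    rw [hDx, hDy]
    exact sandwich_aux hD.2.2 he2 hcomm
  -- Step 2: Δ (e*x*e) = e * D' x * e for a derivation D' vanishing at e
  obtain ⟨D', hD', hD'y, hD'e⟩ := hΔ (e * x * e) e
  have hD'e0 : D' e = 0 := by rw [← hD'e, hΔe]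
  have step2 : Δ (e * x * e) = e * D' x * e := by
    rw [hD'y, hD'.2.2, hD'.2.2, hD'e0]
    noncomm_ring
  rw [step2, ← step1, step2]
  calc e * (e * D' x * e) * e = (e * e) * D' x * (e * e) := by noncomm_ring
    _ = e * D' x * e := by rw [he2]
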